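/- arXiv:1110.6888 — 4 statements merged into one kernel-verified Lean document; each statement's English description precedes it below -/
import Mathlib

section
/- Let p be a prime, G a finite p-group, and A = Ω₁(Z(Φ(G))). Then for every x ∈ G and every a ∈ A, the product a·(x⁻¹ax)·(x⁻²ax²)⋯(x^{-(p-1)}ax^{p-1}) equals the iterated commutator [a, x, x, …, x] with p−1 copies of x (where [a,x] = a⁻¹x⁻¹ax and [a, x, x] = [[a,x],x], etc.; for p−1 = 1 this is just [a,x]). -/
/-- The commutator `[a,b] = a⁻¹b⁻¹ab`. -/
def stmt13Comm {G : Type*} [Group G] (a b : G) : G := a⁻¹ * b⁻¹ * a * b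

/-- The left-normed iterated commutator `[a, x, x, …, x]` with `n` copies of `x`
(`n = 0` gives `a`). -/
def stmt13CommIter {G : Type*} [Group G] (a x : G) : ℕ → G
  | 0 => a
  | n + 1 => stmt13Comm (stmt13CommIter a x n) x

/-- Signed binomial coefficients. -/
def stmt13E (n i : ℕ) : ℤ := (-1) ^ (n + i) * (n.choose i)

lemma stmt13_choose_mod (p : ℕ) (hp : p.Prime) : ∀ i < p, ((p - 1).choose i : ZMod p) = (-1) ^ i := by
  intro i hi
  induction i with
  | zero => simp
  | succ j ih =>
    have hj : j < p := Nat.lt_of_succ_lt hi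
    have hd : (p : ℕ) ∣ p.choose (j + 1) := hp.dvd_choose_self (Nat.succ_ne_zero j) hi
    have hps : p = (p - 1) + 1 := (Nat.succ_pred_eq_of_pos hp.pos).symm
    have h1 : (p - 1).choose j + (p - 1).choose (j + 1) = p.choose (j + 1) := by
      conv_rhs => rw [hps]
      rw [Nat.choose_succ_succ]
    have h2 : ((p.choose (j + 1) : ℕ) : ZMod p) = 0 :=
      (ZMod.natCast_eq_zero_iff _ _).mpr hd
    have h3 : ((p - 1).choose j : ZMod p) + ((p - 1).choose (j + 1) : ZMod p) = 0 := by
      rw [← Nat.cast_add, h1, h2]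
    have h4 := ih hj
    rw [h4] at h3
    have : ((p - 1).choose (j + 1) : ZMod p) = -(-1) ^ j := by linear_combination h3
    rw [this, pow_succ]
    ring

/-- Lemma (prop)(2): for `A = Ω₁(Z(Φ(G)))` in a finite `p`-group `G`, the trace
`a·(x⁻¹ax)·(x⁻²ax²)⋯(x^{-(p-1)}ax^{p-1})` equals `[a, x, …, x]` with `p-1` copies of `x`. -/
theorem stmt_13 (p : ℕ) (hp : p.Prime) (G : Type*) [Group G] [Finite G]
    (hpG : IsPGroup p G) (x : G) (a : G)
    (ha : a ∈ Subgroup.closure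
      {y : G | y ∈ (Subgroup.center (frattini G)).map (frattini G).subtype ∧ y ^ p = 1}) :
    ((List.range p).map fun i => (x ^ i)⁻¹ * a * x ^ i).prod = stmt13CommIter a x (p - 1) := by
  set S : Set G := {y : G | y ∈ (Subgroup.center (frattini G)).map (frattini G).subtype ∧ y ^ p = 1}
    with hSdef
  set H : Subgroup G := Subgroup.closure S with hHdef
  have hS_frat : S ⊆ (frattini G : Set G) := by
    rintro y ⟨⟨z, hz, rfl⟩, -⟩; exact z.2
  have hS_comm : ∀ y ∈ S, ∀ g ∈ frattini G, y * g = g * y := by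
    rintro y ⟨⟨z, hz, rfl⟩, -⟩ g hg
    have h := (Subgroup.mem_center_iff.mp hz) ⟨g, hg⟩
    exact (congrArg Subtype.val h).symm
  have hH_le : H ≤ frattini G := (Subgroup.closure_le _).mpr hS_frat
  have hH_comm : ∀ y ∈ H, ∀ z ∈ H, y * z = z * y := by
    intro y hy z hz
    refine Subgroup.closure_induction (fun w hw => hS_comm w hw z (hH_le hz)) (by group)
      (fun u v hu hv h1 h2 => (Commute.mul_left h1 h2 : _))
      (fun u hu h1 => (Commute.inv_left h1 : _)) hy
  have hH_pow : ∀ y ∈ H, y ^ p = 1 := by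
    intro y hy
    refine Subgroup.closure_induction (fun w hw => hw.2) (one_pow p)
      (fun u v hu hv h1 h2 => ?_) (fun u hu h1 => by rw [inv_pow, h1, inv_one]) hy
    · have hc : Commute u v := hH_comm u hu v hv
      rw [hc.mul_pow, h1, h2, one_mul]
  have hN : (frattini G).Normal := inferInstance
  have hS_conj : ∀ (g : G), ∀ y ∈ S, g⁻¹ * y * g ∈ S := by
    intro g y hy
    obtain ⟨hyc, hyp⟩ := hy
    have hyf : y ∈ frattini G := hS_frat ⟨hyc, hyp⟩
    have hwf : g⁻¹ * y * g ∈ frattini G := by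
      have := hN.conj_mem y hyf g⁻¹
      simpa [mul_assoc] using this
    constructor
    · refine ⟨⟨g⁻¹ * y * g, hwf⟩, Subgroup.mem_center_iff.mpr ?_, rfl⟩
      rintro ⟨u, hu⟩
      have huf : g * u * g⁻¹ ∈ frattini G := hN.conj_mem u hu g
      have hcy : y * (g * u * g⁻¹) = (g * u * g⁻¹) * y := hS_comm y ⟨hyc, hyp⟩ _ huf
      refine Subtype.ext ?_
      show u * (g⁻¹ * y * g) = (g⁻¹ * y * g) * u
      calc u * (g⁻¹ * y * g) = g⁻¹ * ((g * u * g⁻¹) * y) * g := by group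
        _ = g⁻¹ * (y * (g * u * g⁻¹)) * g := by rw [hcy]
        _ = (g⁻¹ * y * g) * u := by group
    · show (g⁻¹ * y * g) ^ p = 1
      have : ∀ n : ℕ, (g⁻¹ * y * g) ^ n = g⁻¹ * y ^ n * g := by
        intro n
        induction n with
        | zero => group
        | succ m ih => rw [pow_succ, ih, pow_succ]; group
      rw [this, hyp]; group
  have hH_conj : ∀ (g : G), ∀ y ∈ H, g⁻¹ * y * g ∈ H := by
    intro g y hy
    refine Subgroup.closure_induction
      (fun w hw => Subgroup.subset_closure (hS_conj g w hw)) (by simpa using one_mem H)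
      (fun u v hu hv h1 h2 => ?_) (fun u hu h1 => ?_) hy
    · have : g⁻¹ * (u * v) * g = (g⁻¹ * u * g) * (g⁻¹ * v * g) := by group
      rw [this]; exact mul_mem h1 h2
    · have : g⁻¹ * u⁻¹ * g = (g⁻¹ * u * g)⁻¹ := by group
      rw [this]; exact inv_mem h1
  letI : CommGroup H := { (inferInstance : Group H) with
    mul_comm := fun y z => Subtype.ext (hH_comm y y.2 z z.2) }
  have hFmem : ∀ i : ℕ, (x ^ i)⁻¹ * a * x ^ i ∈ H := by
    intro i
    induction i with
    | zero => simpa using ha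
    | succ n ih =>
      have heq : (x ^ (n + 1))⁻¹ * a * x ^ (n + 1) = x⁻¹ * ((x ^ n)⁻¹ * a * x ^ n) * x := by
        rw [pow_succ]; group
      rw [heq]; exact hH_conj x _ ih
  set F : ℕ → H := fun i => ⟨(x ^ i)⁻¹ * a * x ^ i, hFmem i⟩ with hFdef
  have hFp : ∀ i, F i ^ p = 1 := by
    intro i
    ext
    push_cast
    exact hH_pow _ (F i).2
  set τ : H →* H :=
    { toFun := fun y => ⟨x⁻¹ * (y : G) * x, hH_conj x _ y.2⟩
      map_one' := Subtype.ext (by push_cast; group)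
      map_mul' := fun y z => Subtype.ext (by
        show x⁻¹ * ((y : G) * z) * x = (x⁻¹ * y * x) * (x⁻¹ * z * x)
        group) } with hτdef
  have hτF : ∀ i, τ (F i) = F (i + 1) := by
    intro i
    refine Subtype.ext ?_
    show x⁻¹ * ((x ^ i)⁻¹ * a * x ^ i) * x = (x ^ (i + 1))⁻¹ * a * x ^ (i + 1)
    rw [pow_succ]; group
  have hmain : ∀ n : ℕ, stmt13CommIter a x n = ((∏ i ∈ Finset.range (n + 1), F i ^ stmt13E n i : H) : G) := by
    intro n
    induction n with
    | zero =>
      show a = _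
      rw [Finset.prod_range_one]
      have : stmt13E 0 0 = 1 := by simp [stmt13E]
      rw [this, zpow_one]
      show a = (x ^ 0)⁻¹ * a * x ^ 0
      group
    | succ n ih =>
      set P : H := ∏ i ∈ Finset.range (n + 1), F i ^ stmt13E n i with hPdef
      have h1 : stmt13CommIter a x (n + 1) = ((P⁻¹ * τ P : H) : G) := by
        show stmt13Comm (stmt13CommIter a x n) x = _
        rw [stmt13Comm, ih]
        show (P : G)⁻¹ * x⁻¹ * (P : G) * x = (P : G)⁻¹ * (x⁻¹ * (P : G) * x)
        group
      rw [h1]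
      congr 1
      have hτP : τ P = ∏ i ∈ Finset.range (n + 1), F (i + 1) ^ stmt13E n i := by
        rw [hPdef, map_prod]
        exact Finset.prod_congr rfl fun i _ => by rw [map_zpow, hτF]
      have hPinv : P⁻¹ = ∏ i ∈ Finset.range (n + 2), F i ^ (-(stmt13E n i)) := by
        rw [Finset.prod_range_succ]
        have h0 : stmt13E n (n + 1) = 0 := by simp [stmt13E, Nat.choose_succ_self]
        rw [h0, neg_zero, zpow_zero, mul_one, hPdef, ← Finset.prod_inv_distrib]
        exact Finset.prod_congr rfl fun i _ => (zpow_neg _ _).symm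
      have hshift : τ P = ∏ i ∈ Finset.range (n + 2),
          F i ^ (if i = 0 then (0 : ℤ) else stmt13E n (i - 1)) := by
        rw [Finset.prod_range_succ', hτP]
        simp
      rw [hPinv, hshift, ← Finset.prod_mul_distrib]
      refine Finset.prod_congr rfl fun i _ => ?_
      rw [← zpow_add]
      congr 1
      rcases i with _ | j
      · simp [stmt13E, pow_succ]
      · simp only [Nat.succ_ne_zero, if_false, Nat.succ_sub_one]
        show -stmt13E n (j + 1) + stmt13E n j = stmt13E (n + 1) (j + 1)
        simp only [stmt13E, Nat.choose_succ_succ (n) (j)]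
        push_cast
        ring
  have hp1 : p - 1 + 1 = p := Nat.succ_pred_eq_of_pos hp.pos
  have hlist : ∀ n : ℕ, ((List.range n).map fun i => (x ^ i)⁻¹ * a * x ^ i).prod
      = ((∏ i ∈ Finset.range n, F i : H) : G) := by
    intro n
    induction n with
    | zero => simp
    | succ m ih =>
      rw [List.range_succ, List.map_append, List.prod_append, Finset.prod_range_succ]
      push_cast
      rw [← ih]
      simp [hFdef]
  rw [hlist p, hmain (p - 1), hp1]
  congr 1
  refine Finset.prod_congr rfl fun i hi => ?_
  have hip : i < p := Finset.mem_range.mp hi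
  have hdvd : (p : ℤ) ∣ stmt13E (p - 1) i - 1 := by
    have hz : ((stmt13E (p - 1) i - 1 : ℤ) : ZMod p) = 0 := by
      push_cast [stmt13E]
      rw [stmt13_choose_mod p hp i hip, ← pow_add]
      have h2 : p - 1 + i + i = p - 1 + 2 * i := by ring
      rw [h2, pow_add, pow_mul]
      norm_num
      rcases hp.eq_two_or_odd' with h2' | hodd
      · subst h2'; decide
      · have he : Even (p - 1) := Nat.Odd.sub_odd hodd odd_one
        rw [he.neg_one_pow]
        norm_num
    exact (ZMod.intCast_zmod_eq_zero_iff_dvd _ p).mp hz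
  obtain ⟨k, hk⟩ := hdvd
  have hE : stmt13E (p - 1) i = 1 + p * k := by linarith
  rw [hE, zpow_add, zpow_one, zpow_mul, zpow_natCast, hFp i, one_zpow, mul_one]
end

section
/- Let p be a prime and let G be a finite nonabelian p-group with C_G(Z(Φ(G))) = Φ(G). Let A = Ω₁(Z(Φ(G))) and A* = Ω₁*(G) ∩ Z(Φ(G)), where Ω₁*(G) = ⟨x ∈ G : x^p ∈ Z(G)⟩. Let δ : G → A be a map such that δ(g) = δ(h) whenever gΦ(G) = hΦ(G), and δ(gh) = (h⁻¹δ(g)h)·δ(h) for all g, h ∈ G. Then the map α : G → G defined by α(x) = x·δ(x) is an automorphism of G satisfying α^p = id and α(x) = x for all x ∈ Φ(G); moreover, α is inner (equal to conjugation by some element of G) if and only if there exists a ∈ A* with δ(x) = [x,a] = x⁻¹a⁻¹xa for all x ∈ G. -/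
/-- Lemma (theme): let `G` be a finite nonabelian `p`-group with `C_G(Z(Φ(G))) = Φ(G)`,
`A = Ω₁(Z(Φ(G)))` and `A* = Ω₁*(G) ∩ Z(Φ(G))`. If `δ : G → A` is constant on cosets of
`Φ(G)` and satisfies `δ(gh) = (h⁻¹ δ(g) h)·δ(h)`, then `x ↦ x·δ(x)` is an automorphism of
order dividing `p` fixing `Φ(G)` elementwise, and it is inner iff `δ = [·, a]` for some
`a ∈ A*`. -/
theorem stmt_15 (p : ℕ) (hp : p.Prime) (G : Type*) [Group G] [Finite G]
    (hpG : IsPGroup p G) (hna : ¬ ∀ a b : G, a * b = b * a)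
    (hcent : Subgroup.centralizer
        (((Subgroup.center (frattini G)).map (frattini G).subtype) : Set G) = frattini G)
    (δ : G → G)
    (hδA : ∀ g : G, δ g ∈ Subgroup.closure
      {y : G | y ∈ (Subgroup.center (frattini G)).map (frattini G).subtype ∧ y ^ p = 1})
    (hδΦ : ∀ g h : G, g⁻¹ * h ∈ frattini G → δ g = δ h)
    (hδder : ∀ g h : G, δ (g * h) = h⁻¹ * δ g * h * δ h) :
    ∃ α : MulAut G, (∀ x : G, α x = x * δ x) ∧ α ^ p = 1 ∧
      (∀ x ∈ frattini G, α x = x) ∧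
      ((∃ g : G, ∀ x : G, α x = g⁻¹ * x * g) ↔
        ∃ a ∈ Subgroup.closure {x : G | x ^ p ∈ Subgroup.center G}
            ⊓ (Subgroup.center (frattini G)).map (frattini G).subtype,
          ∀ x : G, δ x = x⁻¹ * a⁻¹ * x * a) := by
  classical
  -- members of the image of the center of Φ lie in Φ
  have hmapΦ : ∀ y : G,
      y ∈ (Subgroup.center (frattini G)).map (frattini G).subtype → y ∈ frattini G := by
    rintro y ⟨z, hz, rfl⟩
    exact z.2
  -- such members commute with everything in Φ
  have hcomm : ∀ y ∈ (Subgroup.center (frattini G)).map (frattini G).subtype,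
      ∀ z ∈ frattini G, y * z = z * y := by
    rintro y ⟨y', hy', rfl⟩ z hz
    have h1 := (Subgroup.mem_center_iff.mp hy') ⟨z, hz⟩
    have h2 := congrArg (Subtype.val) h1
    exact h2.symm
  -- the generating set of A is already a subgroup
  let K : Subgroup G :=
    { carrier := {y : G | y ∈ (Subgroup.center (frattini G)).map (frattini G).subtype ∧
        y ^ p = 1}
      one_mem' := ⟨Subgroup.one_mem _, one_pow p⟩
      mul_mem' := by
        rintro a b ⟨ha, hap⟩ ⟨hb, hbp⟩
        refine ⟨Subgroup.mul_mem _ ha hb, ?_⟩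
        have hc : Commute a b := hcomm a ha b (hmapΦ b hb)
        rw [hc.mul_pow, hap, hbp, one_mul]
      inv_mem' := by
        rintro a ⟨ha, hap⟩
        exact ⟨Subgroup.inv_mem _ ha, by rw [inv_pow, hap, inv_one]⟩ }
  have hKle : Subgroup.closure
      {y : G | y ∈ (Subgroup.center (frattini G)).map (frattini G).subtype ∧ y ^ p = 1}
      ≤ K := (Subgroup.closure_le K).mpr (fun y hy => hy)
  have hδK : ∀ g : G, δ g ∈ K := fun g => hKle (hδA g)
  have hδΦmem : ∀ g : G, δ g ∈ frattini G := fun g => hmapΦ _ (hδK g).1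
  have hδp : ∀ g : G, (δ g) ^ p = 1 := fun g => (hδK g).2
  -- δ 1 = 1
  have hδ1 : δ 1 = 1 := by
    have h := hδder 1 1
    simp only [mul_one, one_mul, inv_one] at h
    have := mul_left_cancel (a := δ 1) (b := (1 : G)) (c := δ 1)
      (by rw [mul_one, ← h])
    exact this.symm
  -- δ vanishes on Φ
  have hδfix : ∀ φ ∈ frattini G, δ φ = 1 := by
    intro φ hφ
    have := hδΦ 1 φ (by simpa using hφ)
    rw [← this, hδ1]
  -- δ (g * φ) = δ g for φ ∈ Φ
  have hδmulΦ : ∀ (g φ : G), φ ∈ frattini G → δ (g * φ) = δ g := by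
    intro g φ hφ
    exact hδΦ (g * φ) g (by group at *; simpa using Subgroup.inv_mem _ hφ)
  -- the homomorphism
  let f : G →* G :=
    { toFun := fun x => x * δ x
      map_one' := by show (1 : G) * δ 1 = 1; rw [hδ1, mul_one]
      map_mul' := by
        intro g h
        show (g * h) * δ (g * h) = (g * δ g) * (h * δ h)
        rw [hδder g h]
        group }
  have hfinj : Function.Injective f := by
    intro g h hgh
    have h2 : g * δ g = h * δ h := hgh
    have h1 : g⁻¹ * h = δ g * (δ h)⁻¹ := by
      calc g⁻¹ * h = g⁻¹ * (h * δ h) * (δ h)⁻¹ := by group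
        _ = g⁻¹ * (g * δ g) * (δ h)⁻¹ := by rw [h2]
        _ = δ g * (δ h)⁻¹ := by group
    have hmem : g⁻¹ * h ∈ frattini G := by
      rw [h1]; exact Subgroup.mul_mem _ (hδΦmem g) (Subgroup.inv_mem _ (hδΦmem h))
    have hde : δ g = δ h := hδΦ g h hmem
    rw [hde] at h2
    exact mul_right_cancel h2
  have hfbij : Function.Bijective f := Finite.injective_iff_bijective.mp hfinj
  refine ⟨MulEquiv.ofBijective f hfbij, fun x => rfl, ?_, ?_, ?_⟩
  case _ =>
    -- α ^ p = 1
    have hpow : ∀ (n : ℕ) (x : G), ((MulEquiv.ofBijective f hfbij) ^ n) x = x * δ x ^ n := by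
      intro n
      induction n with
      | zero => intro x; simp
      | succ n ih =>
        intro x
        have : ((MulEquiv.ofBijective f hfbij) ^ (n + 1)) x
            = ((MulEquiv.ofBijective f hfbij) ^ n) ((MulEquiv.ofBijective f hfbij) x) := by
          rw [pow_succ, MulAut.mul_apply]
        rw [this]
        have hx : (MulEquiv.ofBijective f hfbij) x = x * δ x := rfl
        rw [hx, ih, hδmulΦ x (δ x) (hδΦmem x), pow_succ]
        group
    refine MulEquiv.ext (fun x => ?_)
    rw [hpow p x, hδp x, mul_one]
    rfl
  case _ =>
    intro x hx
    show x * δ x = x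
    rw [hδfix x hx, mul_one]
  case _ =>
    constructor
    · rintro ⟨g, hg⟩
      -- g commutes with all of Φ
      have hgcomm : ∀ z ∈ frattini G, z * g = g * z := by
        intro z hz
        have h1 : z = g⁻¹ * z * g := by
          have := hg z
          rw [show (MulEquiv.ofBijective f hfbij) z = z * δ z from rfl,
            hδfix z hz, mul_one] at this
          exact this
        conv_rhs => rw [h1]
        group
      have hgΦ : g ∈ frattini G := by
        rw [← hcent]
        refine Subgroup.mem_centralizer_iff.mpr (fun y hy => ?_)
        exact hgcomm y (hmapΦ y hy)
      have hgZ : g ∈ (Subgroup.center (frattini G)).map (frattini G).subtype := by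
        refine ⟨⟨g, hgΦ⟩, Subgroup.mem_center_iff.mpr (fun w => ?_), rfl⟩
        exact Subtype.ext (hgcomm w.1 w.2)
      -- conjugation formula for powers
      have hconj : ∀ (n : ℕ) (x : G),
          ((MulEquiv.ofBijective f hfbij) ^ n) x = (g ^ n)⁻¹ * x * g ^ n := by
        intro n
        induction n with
        | zero => intro x; simp
        | succ n ih =>
          intro x
          have h0 : ((MulEquiv.ofBijective f hfbij) ^ (n + 1)) x
              = ((MulEquiv.ofBijective f hfbij) ^ n) ((MulEquiv.ofBijective f hfbij) x) := by
            rw [pow_succ, MulAut.mul_apply]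
          rw [h0, hg x, ih, pow_succ]
          group
      have hαp : (MulEquiv.ofBijective f hfbij) ^ p = 1 := by
        refine MulEquiv.ext (fun x => ?_)
        have hpow : ∀ (n : ℕ) (x : G),
            ((MulEquiv.ofBijective f hfbij) ^ n) x = x * δ x ^ n := by
          intro n
          induction n with
          | zero => intro x; simp
          | succ n ih =>
            intro x
            have : ((MulEquiv.ofBijective f hfbij) ^ (n + 1)) x
                = ((MulEquiv.ofBijective f hfbij) ^ n) ((MulEquiv.ofBijective f hfbij) x) := by
              rw [pow_succ, MulAut.mul_apply]
            rw [this]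
            have hx : (MulEquiv.ofBijective f hfbij) x = x * δ x := rfl
            rw [hx, ih, hδmulΦ x (δ x) (hδΦmem x), pow_succ]
            group
        rw [hpow p x, hδp x, mul_one]
        rfl
      have hgp : g ^ p ∈ Subgroup.center G := by
        refine Subgroup.mem_center_iff.mpr (fun x => ?_)
        have h1 := hconj p x
        rw [hαp] at h1
        have h2 : x = (g ^ p)⁻¹ * x * g ^ p := h1
        conv_rhs => rw [h2]
        group
      refine ⟨g, Subgroup.mem_inf.mpr ⟨Subgroup.subset_closure hgp, hgZ⟩, fun x => ?_⟩
      have h1 : x * δ x = g⁻¹ * x * g := hg x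
      calc δ x = x⁻¹ * (x * δ x) := by group
        _ = x⁻¹ * (g⁻¹ * x * g) := by rw [h1]
        _ = x⁻¹ * g⁻¹ * x * g := by group
    · rintro ⟨a, _, hδa⟩
      refine ⟨a, fun x => ?_⟩
      show x * δ x = a⁻¹ * x * a
      rw [hδa x]
      group
end

section
/- Let G be a finite abelian group that is the internal direct product of cyclic subgroups ⟨x₁⟩, …, ⟨x_n⟩, and let A be an abelian group on which G acts by automorphisms (write a^g for the action). Given elements b₁, …, b_n ∈ A, there exists a derivation δ : G → A (a map with δ(gh) = (δ(g))^h·δ(h)) such that δ(x_i) = b_i for all i = 1, …, n if and only if both of the following hold: (a) b_i·b_i^{x_i}·b_i^{x_i²}⋯b_i^{x_i^{o(x_i)−1}} = 1 for each i, where o(x_i) is the order of x_i; and (b) b_i⁻¹·b_i^{x_j} = b_j⁻¹·b_j^{x_i} for all i, j. -/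
open Finset Subgroup

/-- Lift from a cyclic subgroup. -/
lemma exists_cyclic_lift {G K : Type*} [Group G] [Group K] (x : G) (k : K)
    (h : ∀ z : ℤ, x ^ z = 1 → k ^ z = 1) :
    ∃ f : Subgroup.zpowers x →* K,
      ∀ z : ℤ, f ⟨x ^ z, zpow_mem (Subgroup.mem_zpowers x) z⟩ = k ^ z := by
  let π : Multiplicative ℤ →* Subgroup.zpowers x :=
    { toFun := fun z => ⟨x ^ (Multiplicative.toAdd z), zpow_mem (Subgroup.mem_zpowers x) _⟩
      map_one' := by ext; simp
      map_mul' := fun a b => by ext; simp [zpow_add] }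
  have hsurj : Function.Surjective π := by
    rintro ⟨u, z, rfl⟩
    exact ⟨Multiplicative.ofAdd z, rfl⟩
  have hker : π.ker ≤ (zpowersHom K k).ker := by
    intro z hz
    have : x ^ (Multiplicative.toAdd z) = 1 := congrArg Subtype.val hz
    exact h _ this
  refine ⟨π.liftOfRightInverse _ (Function.rightInverse_surjInv hsurj) ⟨zpowersHom K k, hker⟩, ?_⟩
  intro z
  have := MonoidHom.liftOfRightInverse_comp_apply π _ (Function.rightInverse_surjInv hsurj)
    ⟨zpowersHom K k, hker⟩ (Multiplicative.ofAdd z)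
  exact this

lemma sdp_pow {A G : Type*} [CommGroup A] [Group G] {φ : G →* MulAut A}
    (a : A) (g : G) (m : ℕ) :
    (⟨a, g⟩ : A ⋊[φ] G) ^ m = ⟨∏ j ∈ Finset.range m, φ (g ^ j) a, g ^ m⟩ := by
  induction m with
  | zero =>
      ext <;> simp
  | succ m ih =>
      rw [pow_succ, ih, SemidirectProduct.mul_def]
      ext <;> simp [Finset.prod_range_succ, pow_succ]

lemma der_pow {G A : Type*} [Group G] [CommGroup A] [MulDistribMulAction G A]
    (δ : G → A) (hδ : ∀ g h : G, δ (g * h) = h • δ g * δ h) (g : G) (m : ℕ) :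
    δ (g ^ m) = ∏ j ∈ Finset.range m, g ^ j • δ g := by
  have h1 : δ 1 = 1 := by
    have := hδ 1 1
    simp only [mul_one, one_smul] at this
    exact (left_eq_mul.mp this)
  induction m with
  | zero => simpa using h1
  | succ m ih =>
      rw [pow_succ, hδ, ih, Finset.smul_prod', Finset.prod_range_succ']
      congr 1
      · exact Finset.prod_congr rfl fun j _ => by rw [smul_smul, ← pow_succ']
      · rw [pow_zero, one_smul]


/-- Lemma (der): let `G` be a finite abelian group that is the internal direct product of
cyclic subgroups `⟨x₁⟩, …, ⟨xₙ⟩` acting on an abelian group `A`. Given `b₁, …, bₙ ∈ A`,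
there is a derivation `δ : G → A` with `δ(xᵢ) = bᵢ` for all `i` iff `τ_{xᵢ}(bᵢ) = 1` for
all `i` and `[bᵢ, xⱼ] = [bⱼ, xᵢ]` for all `i, j`. -/
theorem stmt_17 (G A : Type*) [CommGroup G] [Finite G] [CommGroup A]
    [MulDistribMulAction G A]
    (n : ℕ) (x : Fin n → G)
    (hind : iSupIndep fun i => Subgroup.zpowers (x i))
    (hgen : (⨆ i, Subgroup.zpowers (x i)) = ⊤)
    (b : Fin n → A) :
    (∃ δ : G → A, (∀ g h : G, δ (g * h) = h • δ g * δ h) ∧ ∀ i, δ (x i) = b i) ↔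
      ((∀ i, (∏ j ∈ Finset.range (orderOf (x i)), (x i ^ j) • b i) = 1) ∧
        ∀ i j, (b i)⁻¹ * (x j) • b i = (b j)⁻¹ * (x i) • b j) := by
  classical
  constructor
  · rintro ⟨δ, hδ, hδx⟩
    have h1 : δ 1 = 1 := by
      have := hδ 1 1
      simp only [mul_one, one_smul] at this
      exact (left_eq_mul.mp this)
    constructor
    · intro i
      have := der_pow δ hδ (x i) (orderOf (x i))
      rw [pow_orderOf_eq_one, h1, hδx] at this
      exact this.symm
    · intro i j
      have E : (x j) • b i * b j = (x i) • b j * b i := by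
        have h2 := hδ (x j) (x i)
        rw [mul_comm (x j) (x i), hδ (x i) (x j)] at h2
        simp only [hδx] at h2
        exact h2
      rw [inv_mul_eq_div, inv_mul_eq_div, div_eq_div_iff_mul_eq_mul]
      exact E
  · rintro ⟨ha, hb⟩
    set φ : G →* MulAut A := (MulDistribMulAction.toMulAut G A).comp invMonoidHom with hφdef
    have hφ : ∀ (g : G) (a : A), φ g a = g⁻¹ • a := fun g a => rfl
    set k : Fin n → A ⋊[φ] G := fun i => ⟨(x i)⁻¹ • b i, x i⟩ with hk
    -- order condition
    have hko : ∀ i, k i ^ orderOf (x i) = 1 := by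
      intro i
      rw [hk, sdp_pow]
      have hcongr : ∀ j ∈ Finset.range (orderOf (x i)),
          φ ((x i) ^ j) ((x i)⁻¹ • b i) = (x i) ^ (orderOf (x i) - 1 - j) • b i := by
        intro j hj
        rw [Finset.mem_range] at hj
        rw [hφ, smul_smul]
        congr 1
        rw [← mul_inv_rev, ← pow_succ']
        refine inv_eq_of_mul_eq_one_right ?_
        rw [← pow_add]
        have hexp : j + 1 + (orderOf (x i) - 1 - j) = orderOf (x i) := by omega
        rw [hexp, pow_orderOf_eq_one]
      ext
      · show (∏ j ∈ Finset.range (orderOf (x i)),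
            φ ((x i) ^ j) ((x i)⁻¹ • b i)) = (1 : A ⋊[φ] G).left
        rw [SemidirectProduct.one_left, Finset.prod_congr rfl hcongr]
        exact (Finset.prod_range_reflect (fun m => x i ^ m • b i) (orderOf (x i))).trans (ha i)
      · show (x i) ^ orderOf (x i) = (1 : A ⋊[φ] G).right
        rw [SemidirectProduct.one_right]
        exact pow_orderOf_eq_one (x i)
    have hkz : ∀ i, ∀ z : ℤ, (x i) ^ z = 1 → k i ^ z = 1 := by
      intro i z hz
      obtain ⟨c, rfl⟩ := orderOf_dvd_iff_zpow_eq_one.mpr hz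
      rw [zpow_mul, zpow_natCast, hko, one_zpow]
    choose f hf using fun i => exists_cyclic_lift (x i) (k i) (hkz i)
    have hfx : ∀ i, f i ⟨x i, Subgroup.mem_zpowers (x i)⟩ = k i := by
      intro i
      have h1 : (⟨x i, Subgroup.mem_zpowers (x i)⟩ : Subgroup.zpowers (x i))
          = ⟨(x i) ^ (1 : ℤ), zpow_mem (Subgroup.mem_zpowers (x i)) 1⟩ := by
        ext; simp
      rw [h1, hf i 1, zpow_one]
    have hfu : ∀ i (u : Subgroup.zpowers (x i)),
        ∃ z : ℤ, f i u = k i ^ z ∧ (u : G) = (x i) ^ z := by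
      intro i u
      obtain ⟨z, hz⟩ := u.2
      have : u = ⟨(x i) ^ z, zpow_mem (Subgroup.mem_zpowers (x i)) z⟩ := Subtype.ext hz.symm
      exact ⟨z, by rw [this, hf i z], hz.symm⟩
    have hcommk : ∀ i j, Commute (k i) (k j) := by
      intro i j
      show k i * k j = k j * k i
      have E : (x j) • b i * b j = (x i) • b j * b i := by
        have h := hb i j
        rw [inv_mul_eq_div, inv_mul_eq_div, div_eq_div_iff_mul_eq_mul] at h
        exact h
      ext
      · show (x i)⁻¹ • b i * φ (x i) ((x j)⁻¹ • b j)
            = (x j)⁻¹ • b j * φ (x j) ((x i)⁻¹ • b i)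
        rw [hφ, hφ, smul_smul, smul_smul]
        apply MulAction.injective (x i * x j)
        change (x i * x j) • _ = (x i * x j) • _
        rw [smul_mul', smul_mul', smul_smul, smul_smul, smul_smul, smul_smul]
        have e1 : x i * x j * (x i)⁻¹ = x j := by
          rw [mul_comm (x i) (x j), mul_inv_cancel_right]
        have e2 : x i * x j * ((x i)⁻¹ * (x j)⁻¹) = 1 := by
          simp [mul_comm, mul_assoc, mul_left_comm]
        have e3 : x i * x j * (x j)⁻¹ = x i := by rw [mul_inv_cancel_right]
        have e4 : x i * x j * ((x j)⁻¹ * (x i)⁻¹) = 1 := by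
          simp [mul_comm, mul_assoc, mul_left_comm]
        rw [e1, e2, e3, e4, one_smul, one_smul]
        exact E
      · exact mul_comm (x i) (x j)
    have hcommf : Pairwise fun i j => ∀ (u : Subgroup.zpowers (x i))
        (v : Subgroup.zpowers (x j)), Commute (f i u) (f j v) := by
      intro i j _
      intro u v
      obtain ⟨zu, hu, _⟩ := hfu i u
      obtain ⟨zv, hv, _⟩ := hfu j v
      rw [hu, hv]
      exact (hcommk i j).zpow_zpow zu zv
    set F := MonoidHom.noncommPiCoprod f hcommf with hF
    have hcommG : Pairwise fun i j : Fin n => ∀ u v : G,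
        u ∈ Subgroup.zpowers (x i) → v ∈ Subgroup.zpowers (x j) → Commute u v :=
      fun i j _ u v _ _ => mul_comm u v
    set Φ := Subgroup.noncommPiCoprod hcommG with hΦ
    have hΦinj : Function.Injective Φ :=
      Subgroup.injective_noncommPiCoprod_of_iSupIndep hind
    have hΦsurj : Function.Surjective Φ := by
      have : Φ.range = ⊤ := by rw [hΦ, Subgroup.noncommPiCoprod_range]; exact hgen
      exact MonoidHom.range_eq_top.mp this
    set e := MulEquiv.ofBijective Φ ⟨hΦinj, hΦsurj⟩ with he
    have hFright : ∀ p, (F p).right = Φ p := by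
      intro p
      have h0 : (F p).right = SemidirectProduct.rightHom (F p) := rfl
      rw [h0, hF, MonoidHom.noncommPiCoprod_apply,
        Finset.map_noncommProd, hΦ, Subgroup.noncommPiCoprod_apply]
      refine Finset.noncommProd_congr rfl ?_ _
      intro i _
      obtain ⟨z, hz, hcoe⟩ := hfu i (p i)
      rw [hz, map_zpow]
      show (x i) ^ z = ((p i : G))
      exact hcoe.symm
    have hFr : ∀ g : G, (F (e.symm g)).right = g := by
      intro g
      rw [hFright]
      have : Φ (e.symm g) = e (e.symm g) := rfl
      rw [this, e.apply_symm_apply]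
    refine ⟨fun g => g • (F (e.symm g)).left, ?_, ?_⟩
    · intro g h
      have hmul : e.symm (g * h) = e.symm g * e.symm h := map_mul e.symm g h
      show (g * h) • (F (e.symm (g * h))).left
          = h • (g • (F (e.symm g)).left) * (h • (F (e.symm h)).left)
      rw [hmul, map_mul, SemidirectProduct.mul_left, hFr g, hφ]
      rw [smul_mul', smul_smul, smul_smul]
      have c2 : g * h * g⁻¹ = h := by rw [mul_comm g h, mul_inv_cancel_right]
      rw [c2, mul_comm g h]
    · intro i
      have hsingle : e.symm (x i) = Pi.mulSingle i ⟨x i, Subgroup.mem_zpowers (x i)⟩ := by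
        rw [MulEquiv.symm_apply_eq]
        show x i = Φ (Pi.mulSingle i ⟨x i, Subgroup.mem_zpowers (x i)⟩)
        rw [hΦ, Subgroup.noncommPiCoprod_mulSingle]
      show x i • (F (e.symm (x i))).left = b i
      rw [hsingle]
      rw [hF, MonoidHom.noncommPiCoprod_mulSingle, hfx]
      show x i • ((x i)⁻¹ • b i) = b i
      rw [smul_smul, mul_inv_cancel, one_smul]
end

section
/- Let G be a finite 3-group of nilpotency class at most 3. Then for all x, y, z ∈ G: [x,y,z]·[y,z,x]·[z,x,y] = 1, where [a,b] = a⁻¹b⁻¹ab and [a,b,c] = [[a,b],c]. -/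
/-- The commutator `[a,b] = a⁻¹b⁻¹ab`. -/
def stmt19Comm {G : Type*} [Group G] (a b : G) : G := a⁻¹ * b⁻¹ * a * b

section Aux

variable {G : Type*} [Group G]

/-- Hall–Witt identity (a free-group identity). -/
lemma stmt19_hw (x y z : G) :
    (y⁻¹ * stmt19Comm (stmt19Comm x y⁻¹) z * y) *
    (z⁻¹ * stmt19Comm (stmt19Comm y z⁻¹) x * z) *
    (x⁻¹ * stmt19Comm (stmt19Comm z x⁻¹) y * x) = 1 := by
  simp only [stmt19Comm]; group

lemma stmt19_inv_arg (a b : G) : stmt19Comm a b⁻¹ = b * (stmt19Comm a b)⁻¹ * b⁻¹ := by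
  simp only [stmt19Comm]; group

lemma stmt19_conj_left (g v z : G) :
    stmt19Comm (g * v * g⁻¹) z = g * stmt19Comm v (g⁻¹ * z * g) * g⁻¹ := by
  simp only [stmt19Comm]; group

lemma stmt19_mul_right_free (u c d : G) :
    stmt19Comm u (c * d) = stmt19Comm u d * (d⁻¹ * stmt19Comm u c * d) := by
  simp only [stmt19Comm]; group

lemma stmt19_inv_left_free (u c : G) :
    stmt19Comm u⁻¹ c = u * (stmt19Comm u c)⁻¹ * u⁻¹ := by
  simp only [stmt19Comm]; group

lemma stmt19_central_conj {t g : G} (h : Commute t g) : g⁻¹ * t * g = t := by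
  rw [mul_assoc, h.eq, ← mul_assoc, inv_mul_cancel, one_mul]

lemma stmt19_central_conj' {t g : G} (h : Commute t g) : g * t * g⁻¹ = t := by
  rw [mul_assoc, h.inv_right.eq, ← mul_assoc, mul_inv_cancel, one_mul]

variable (H : ∀ a b c d : G, Commute (stmt19Comm (stmt19Comm a b) c) d)
include H

lemma stmt19_mul_right (a b c d : G) :
    stmt19Comm (stmt19Comm a b) (c * d) =
      stmt19Comm (stmt19Comm a b) c * stmt19Comm (stmt19Comm a b) d := by
  rw [stmt19_mul_right_free, stmt19_central_conj (H a b c d)]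
  exact (H a b d (stmt19Comm (stmt19Comm a b) c)).eq

lemma stmt19_inv_right (a b c : G) :
    stmt19Comm (stmt19Comm a b) c⁻¹ = (stmt19Comm (stmt19Comm a b) c)⁻¹ := by
  rw [stmt19_inv_arg]
  exact stmt19_central_conj' (H a b c c).inv_left

lemma stmt19_inv_left (a b c : G) :
    stmt19Comm (stmt19Comm a b)⁻¹ c = (stmt19Comm (stmt19Comm a b) c)⁻¹ := by
  rw [stmt19_inv_left_free]
  exact stmt19_central_conj' (H a b c (stmt19Comm a b)).inv_left

lemma stmt19_key (x y z : G) :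
    stmt19Comm (stmt19Comm x y⁻¹) z = (stmt19Comm (stmt19Comm x y) z)⁻¹ := by
  rw [stmt19_inv_arg, stmt19_conj_left, stmt19_inv_left H,
    show y⁻¹ * z * y = y⁻¹ * (z * y) from by group,
    stmt19_mul_right H, stmt19_mul_right H, stmt19_inv_right H]
  set t1 := stmt19Comm (stmt19Comm x y) y with ht1
  set t2 := stmt19Comm (stmt19Comm x y) z with ht2
  have c12 : Commute t1 t2 := H x y y t2
  have cy : Commute t2 y := H x y z y
  have e1 : t1⁻¹ * (t2 * t1) = t2 := by
    rw [← mul_assoc]; exact stmt19_central_conj (H x y z t1)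
  rw [e1]
  exact stmt19_central_conj' cy.inv_left

lemma stmt19_main (x y z : G) :
    stmt19Comm (stmt19Comm x y) z * stmt19Comm (stmt19Comm y z) x *
      stmt19Comm (stmt19Comm z x) y = 1 := by
  set t1 := stmt19Comm (stmt19Comm x y) z with ht1
  set t2 := stmt19Comm (stmt19Comm y z) x with ht2
  set t3 := stmt19Comm (stmt19Comm z x) y with ht3
  have hw := stmt19_hw x y z
  rw [stmt19_key H, stmt19_key H, stmt19_key H] at hw
  -- remove conjugations: each conjugated element is central
  have c1 : Commute t1⁻¹ y := (H x y z y).inv_left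
  have c2 : Commute t2⁻¹ z := (H y z x z).inv_left
  have c3 : Commute t3⁻¹ x := (H z x y x).inv_left
  have e1 : y⁻¹ * t1⁻¹ * y = t1⁻¹ := stmt19_central_conj c1
  have e2 : z⁻¹ * t2⁻¹ * z = t2⁻¹ := stmt19_central_conj c2
  have e3 : x⁻¹ * t3⁻¹ * x = t3⁻¹ := stmt19_central_conj c3
  rw [e1, e2, e3] at hw
  have hw' : t3 * t2 * t1 = 1 := by
    have := congrArg (·⁻¹) hw
    simpa [mul_assoc] using this
  have c13 : Commute t1 t3 := H x y z t3
  have c12 : Commute t1 t2 := H x y z t2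
  calc t1 * t2 * t3 = t1 * (t2 * t3) := by rw [mul_assoc]
    _ = (t2 * t3) * t1 := (c12.mul_right c13).eq
    _ = t3 * t2 * t1 := by rw [(H y z x t3).symm.eq, mul_assoc]
    _ = 1 := hw'

end Aux

open scoped commutatorElement

/-- Lemma (equ)(5): in a finite 3-group of nilpotency class at most 3,
`[x,y,z]·[y,z,x]·[z,x,y] = 1`. -/
theorem stmt_19 (G : Type*) [Group G] [Finite G] (hpG : IsPGroup 3 G)
    (hclass : upperCentralSeries G 3 = ⊤) (x y z : G) :
    stmt19Comm (stmt19Comm x y) z * stmt19Comm (stmt19Comm y z) x *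
      stmt19Comm (stmt19Comm z x) y = 1 := by
  haveI : Group.IsNilpotent G := ⟨⟨3, hclass⟩⟩
  have hcl : Group.nilpotencyClass G ≤ 3 :=
    upperCentralSeries_eq_top_iff_nilpotencyClass_le.mp hclass
  have hbot : Subgroup.lowerCentralSeries (⊤ : Subgroup G) 3 = ⊥ :=
    lowerCentralSeries_eq_bot_iff_nilpotencyClass_le.mpr hcl
  have H : ∀ a b c d : G, Commute (stmt19Comm (stmt19Comm a b) c) d := by
    intro a b c d
    have hmem : ∀ u v : G, u ∈ (⊤ : Subgroup G) →
        stmt19Comm u v ∈ ⁅(⊤ : Subgroup G), (⊤ : Subgroup G)⁆ := by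
      intro u v _
      have : stmt19Comm u v = ⁅u⁻¹, v⁻¹⁆ := by
        simp only [stmt19Comm, commutatorElement_def, inv_inv]
      rw [this]
      exact Subgroup.commutator_mem_commutator (Subgroup.mem_top _) (Subgroup.mem_top _)
    have step : ∀ (n : ℕ) (u v : G), u ∈ Subgroup.lowerCentralSeries (⊤ : Subgroup G) n →
        stmt19Comm u v ∈ Subgroup.lowerCentralSeries (⊤ : Subgroup G) (n + 1) := by
      intro n u v hu
      have : stmt19Comm u v = ⁅u⁻¹, v⁻¹⁆ := by
        simp only [stmt19Comm, commutatorElement_def, inv_inv]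
      rw [this, lowerCentralSeries_succ]
      exact Subgroup.commutator_mem_commutator ((Subgroup.lowerCentralSeries (⊤ : Subgroup G) n).inv_mem hu)
        (Subgroup.mem_top _)
    have h1 : stmt19Comm a b ∈ Subgroup.lowerCentralSeries (⊤ : Subgroup G) 1 :=
      step 0 a b (Subgroup.mem_top _)
    have h2 : stmt19Comm (stmt19Comm a b) c ∈ Subgroup.lowerCentralSeries (⊤ : Subgroup G) 2 :=
      step 1 _ c h1
    have h3 : stmt19Comm (stmt19Comm (stmt19Comm a b) c) d ∈ Subgroup.lowerCentralSeries (⊤ : Subgroup G) 3 :=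
      step 2 _ d h2
    rw [hbot, Subgroup.mem_bot] at h3
    set t := stmt19Comm (stmt19Comm a b) c with ht
    have h3' : t⁻¹ * d⁻¹ * t * d = 1 := h3
    show t * d = d * t
    calc t * d = (d * t) * (t⁻¹ * d⁻¹ * t * d) := by group
      _ = d * t := by rw [h3', mul_one]
  exact stmt19_main H x y z
end
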